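/- (Posterior tree distribution is Galton–Watson.) Let L ≥ 1, a > 0, and x₁,…,xₙ ∈ [0,1). For a binary string ε with |ε| < L set ν_ε = 2^{N(I_ε)} * B(a + N(I_{ε0}), a + N(I_{ε1})) / B(a,a), where for I ⊆ [0,1), N(I) = #{i : xᵢ ∈ I}. Let p assign to every binary string ε of length |ε| ≤ L a number p_ε ∈ [0,1) with p_ε = 0 whenever |ε| = L, and let q be the unique function with values in [0,1), q_ε = 0 for |ε| = L, satisfying (q_ε/(1 − q_ε))(1 − q_{ε0})(1 − q_{ε1}) = (p_ε/(1 − p_ε))(1 − p_{ε0})(1 − p_{ε1}) ν_ε for all |ε| < L. Then there exists a constant c > 0, independent of the tree, such that for every full binary tree T with d(T) ≤ L (identifying nodes (l,k) with the binary strings ε(k,l)): ( Π_{ε ∈ T_int} p_ε ν_ε ) * ( Π_{ε ∈ T_ext} (1 − p_ε) ) = c * ( Π_{ε ∈ T_int} q_ε ) * ( Π_{ε ∈ T_ext} (1 − q_ε) ). -/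

import Mathlib

open scoped Classical

/-- The dyadic interval `I_{l,k} = [k 2^{-l}, (k+1) 2^{-l})`. -/
def dyadicI (l k : ℕ) : Set ℝ := Set.Ico ((k : ℝ) / 2 ^ l) (((k : ℝ) + 1) / 2 ^ l)

/-- A full binary tree (as a finite set of nodes): nodes `(l,k)` satisfy `k < 2^l`, and any
node of positive depth has its parent `(l-1, ⌊k/2⌋)` and its sibling `(l, k + (-1)^k)`
in the tree. -/
def IsFullBinaryTree (T : Finset (ℕ × ℕ)) : Prop :=
  (∀ p ∈ T, p.2 < 2 ^ p.1) ∧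
  ∀ p ∈ T, 0 < p.1 →
    (p.1 - 1, p.2 / 2) ∈ T ∧ (p.1, if p.2 % 2 = 0 then p.2 + 1 else p.2 - 1) ∈ T

/-- The internal nodes of `T`. -/
def treeInt (T : Finset (ℕ × ℕ)) : Finset (ℕ × ℕ) :=
  T.filter fun p => (p.1 + 1, 2 * p.2) ∈ T

/-- The external nodes (leaves) of `T`. -/
def treeExt (T : Finset (ℕ × ℕ)) : Finset (ℕ × ℕ) :=
  T.filter fun p => (p.1 + 1, 2 * p.2) ∉ T

/-- `N(I) = #{i : xᵢ ∈ I}`. -/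
noncomputable def cnt {n : ℕ} (x : Fin n → ℝ) (I : Set ℝ) : ℕ :=
  (Finset.univ.filter fun i => x i ∈ I).card

/-- The Beta function `B(x,y) = Γ(x)Γ(y)/Γ(x+y)`. -/
noncomputable def betaFn (x y : ℝ) : ℝ := Real.Gamma x * Real.Gamma y / Real.Gamma (x + y)

/-- `ν_ε = 2^{N(I_ε)} B(a + N(I_{ε0}), a + N(I_{ε1})) / B(a,a)`, identifying binary strings
`ε` with pairs `(l,k)`. -/
noncomputable def nuX (a : ℝ) {n : ℕ} (x : Fin n → ℝ) (l k : ℕ) : ℝ :=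
  2 ^ cnt x (dyadicI l k) *
    betaFn (a + cnt x (dyadicI (l + 1) (2 * k))) (a + cnt x (dyadicI (l + 1) (2 * k + 1))) /
      betaFn a a

lemma fbt_root {T : Finset (ℕ × ℕ)} (hT : IsFullBinaryTree T) :
    ∀ l k : ℕ, (l, k) ∈ T → ((0 : ℕ), (0 : ℕ)) ∈ T := by
  intro l
  induction l with
  | zero =>
    intro k hk
    have hb := hT.1 _ hk
    simp only [pow_zero] at hb
    have : k = 0 := by omega
    subst this; exact hk
  | succ l ih =>
    intro k hk
    have h := (hT.2 _ hk (Nat.succ_pos l)).1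
    exact ih (k / 2) (by simpa using h)

lemma fbt_erase2 {T : Finset (ℕ × ℕ)} (hT : IsFullBinaryTree T) {l m : ℕ} (hpos : 0 < l)
    (hmax : ∀ r ∈ T, r.1 ≤ l) :
    IsFullBinaryTree ((T.erase (l, 2 * m)).erase (l, 2 * m + 1)) := by
  constructor
  · intro r hr
    exact hT.1 r (Finset.mem_of_mem_erase (Finset.mem_of_mem_erase hr))
  · rintro ⟨i, j⟩ hr hrpos
    simp only [Finset.mem_erase, Ne, Prod.mk.injEq, not_and] at hr
    obtain ⟨h1, h0, hij⟩ := hr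
    obtain ⟨hpar, hsib⟩ := hT.2 _ hij hrpos
    simp only at hpar hsib hrpos
    constructor
    · simp only [Finset.mem_erase, Ne, Prod.mk.injEq, not_and]
      have hi : i ≤ l := hmax _ hij
      exact ⟨fun h _ => by omega, fun h _ => by omega, hpar⟩
    · simp only [Finset.mem_erase, Ne, Prod.mk.injEq, not_and]
      refine ⟨?_, ?_, hsib⟩
      · rintro rfl h
        rcases Nat.mod_two_eq_zero_or_one j with h2 | h2
        · rw [if_pos h2] at h; exact h0 rfl (by omega)
        · rw [if_neg (by omega)] at h; omega
      · rintro rfl h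
        rcases Nat.mod_two_eq_zero_or_one j with h2 | h2
        · rw [if_pos h2] at h; omega
        · rw [if_neg (by omega)] at h; exact h1 rfl (by omega)

lemma int_erase2 {T : Finset (ℕ × ℕ)} {l m : ℕ} (hpos : 0 < l)
    (hmax : ∀ r ∈ T, r.1 ≤ l) :
    treeInt ((T.erase (l, 2 * m)).erase (l, 2 * m + 1)) = (treeInt T).erase (l - 1, m) := by
  ext ⟨i, j⟩
  simp only [treeInt, Finset.mem_filter, Finset.mem_erase, Ne, Prod.mk.injEq, not_and]
  constructor
  · rintro ⟨⟨h1, h0, hij⟩, hch1, hch0, hch⟩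
    refine ⟨?_, hij, hch⟩
    rintro rfl hj
    exact hch0 (by omega) (by omega)
  · rintro ⟨hne, hij, hch⟩
    have hi_le : i + 1 ≤ l := hmax _ hch
    refine ⟨⟨fun h _ => by omega, fun h _ => by omega, hij⟩, ?_, ?_, hch⟩
    · intro _; omega
    · intro h hj
      exact hne (by omega) (by omega)

lemma ext_erase2 {T : Finset (ℕ × ℕ)} {l m : ℕ} (hpos : 0 < l)
    (hmax : ∀ r ∈ T, r.1 ≤ l) (hm : (l - 1, m) ∈ T) :
    treeExt ((T.erase (l, 2 * m)).erase (l, 2 * m + 1)) =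
      insert (l - 1, m) (((treeExt T).erase (l, 2 * m)).erase (l, 2 * m + 1)) := by
  ext ⟨i, j⟩
  simp only [treeExt, Finset.mem_filter, Finset.mem_erase, Finset.mem_insert, Ne,
    Prod.mk.injEq, not_and]
  constructor
  · rintro ⟨⟨h1, h0, hij⟩, hch⟩
    by_cases hc : (i + 1, 2 * j) ∈ T
    · left
      -- child is in T but not in T'; can't be (l,2m+1) by parity, so it's (l,2m)
      by_cases h0' : i + 1 = l ∧ 2 * j = 2 * m
      · exact ⟨by omega, by omega⟩
      · exfalso
        exact hch (fun h _ => by omega) (fun ha hb => h0' ⟨ha, hb⟩) hc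
    · right
      exact ⟨h1, h0, hij, fun h => hc h⟩
  · rintro (⟨hi, hj⟩ | ⟨h1, h0, hij, hch⟩)
    · subst hi; subst hj
      refine ⟨⟨fun h _ => by omega, fun h _ => by omega, hm⟩, ?_⟩
      intro _ h2 _
      exact h2 (by omega) rfl
    · refine ⟨⟨h1, h0, hij⟩, ?_⟩
      intro _ _ h3
      exact hch h3

/-- (Posterior tree distribution is Galton–Watson.) Let `L ≥ 1`, `a > 0`,
`x₁, …, xₙ ∈ [0,1)`, and set `ν_ε = 2^{N(I_ε)} B(a+N(I_{ε0}), a+N(I_{ε1}))/B(a,a)`. Let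
`p_ε ∈ [0,1)` for `|ε| ≤ L` with `p_ε = 0` when `|ε| = L`, and let `q` have values in `[0,1)`,
`q_ε = 0` when `|ε| = L`, and satisfy
`(q_ε/(1-q_ε))(1-q_{ε0})(1-q_{ε1}) = (p_ε/(1-p_ε))(1-p_{ε0})(1-p_{ε1}) ν_ε` for `|ε| < L`.
Then there is a constant `c > 0`, independent of the tree, such that for every full binary
tree `T` with `d(T) ≤ L`:
`(Π_{ε ∈ T_int} p_ε ν_ε)(Π_{ε ∈ T_ext} (1-p_ε)) = c (Π_{ε ∈ T_int} q_ε)(Π_{ε ∈ T_ext} (1-q_ε))`. -/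
theorem stmt_18 (L : ℕ) (hL : 1 ≤ L) (a : ℝ) (ha : 0 < a)
    (n : ℕ) (x : Fin n → ℝ) (hx : ∀ i, x i ∈ Set.Ico (0 : ℝ) 1)
    (p q : ℕ → ℕ → ℝ)
    (hp : ∀ l ≤ L, ∀ k < 2 ^ l, p l k ∈ Set.Ico (0 : ℝ) 1)
    (hpL : ∀ k < 2 ^ L, p L k = 0)
    (hq : ∀ l ≤ L, ∀ k < 2 ^ l, q l k ∈ Set.Ico (0 : ℝ) 1)
    (hqL : ∀ k < 2 ^ L, q L k = 0)
    (hrec : ∀ l < L, ∀ k < 2 ^ l,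
      q l k / (1 - q l k) * (1 - q (l + 1) (2 * k)) * (1 - q (l + 1) (2 * k + 1)) =
        p l k / (1 - p l k) * (1 - p (l + 1) (2 * k)) * (1 - p (l + 1) (2 * k + 1)) *
          nuX a x l k) :
    ∃ c > 0, ∀ T : Finset (ℕ × ℕ), IsFullBinaryTree T → T.Nonempty →
      (∀ r ∈ T, r.1 ≤ L) →
      (∏ r ∈ treeInt T, p r.1 r.2 * nuX a x r.1 r.2) *
          (∏ r ∈ treeExt T, (1 - p r.1 r.2)) =
        c * (∏ r ∈ treeInt T, q r.1 r.2) * (∏ r ∈ treeExt T, (1 - q r.1 r.2)) := by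
  have hp0 := hp 0 (Nat.zero_le L) 0 (by norm_num)
  have hq0 := hq 0 (Nat.zero_le L) 0 (by norm_num)
  have hp0' : (0 : ℝ) < 1 - p 0 0 := by linarith [hp0.2]
  have hq0' : (0 : ℝ) < 1 - q 0 0 := by linarith [hq0.2]
  refine ⟨(1 - p 0 0) / (1 - q 0 0), div_pos hp0' hq0', ?_⟩
  suffices key : ∀ N : ℕ, ∀ T : Finset (ℕ × ℕ), T.card ≤ N → IsFullBinaryTree T →
      T.Nonempty → (∀ r ∈ T, r.1 ≤ L) →
      ((∏ r ∈ treeInt T, p r.1 r.2 * nuX a x r.1 r.2) *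
          (∏ r ∈ treeExt T, (1 - p r.1 r.2))) * (1 - q 0 0) =
        ((∏ r ∈ treeInt T, q r.1 r.2) * (∏ r ∈ treeExt T, (1 - q r.1 r.2))) * (1 - p 0 0) by
    intro T hT hne hb
    have h := key T.card T le_rfl hT hne hb
    rw [div_mul_eq_mul_div, div_mul_eq_mul_div, eq_div_iff hq0'.ne']
    linear_combination h
  intro N
  induction N with
  | zero =>
    intro T hcard hT hne hb
    exact absurd (Finset.card_eq_zero.mp (Nat.le_zero.mp hcard)) hne.ne_empty
  | succ N ih =>
    intro T hcard hT hne hb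
    obtain ⟨⟨l, k⟩, hr0, hmax⟩ := T.exists_max_image Prod.fst hne
    have hmax' : ∀ r ∈ T, r.1 ≤ l := hmax
    rcases Nat.eq_zero_or_pos l with h0 | hpos
    · -- T = {(0,0)}
      subst h0
      have hroot : ((0 : ℕ), (0 : ℕ)) ∈ T := fbt_root hT 0 k hr0
      have hTs : T = {((0 : ℕ), (0 : ℕ))} := by
        apply Finset.eq_singleton_iff_unique_mem.mpr
        refine ⟨hroot, fun r hr => ?_⟩
        have h1 : r.1 = 0 := Nat.le_antisymm (hmax' r hr) (Nat.zero_le _)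
        have h2 : r.2 < 2 ^ r.1 := hT.1 r hr
        rw [h1] at h2
        have h3 : r.2 = 0 := by simpa using h2
        exact Prod.ext h1 h3
      subst hTs
      have hint : treeInt {((0 : ℕ), (0 : ℕ))} = ∅ := by
        simp [treeInt, Finset.filter_singleton]
      have hext : treeExt {((0 : ℕ), (0 : ℕ))} = {((0 : ℕ), (0 : ℕ))} := by
        simp [treeExt, Finset.filter_singleton]
      rw [hint, hext]
      simp only [Finset.prod_empty, Finset.prod_singleton]
      ring
    · -- inductive step
      set m := k / 2 with hmdef
      have hm : (l - 1, m) ∈ T := (hT.2 (l, k) hr0 hpos).1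
      have hc0 : (l, 2 * m) ∈ T := by
        rcases Nat.mod_two_eq_zero_or_one k with hk2 | hk2
        · have h : 2 * m = k := by omega
          rw [h]; exact hr0
        · have hs := (hT.2 (l, k) hr0 hpos).2
          simp only at hs
          rw [if_neg (by omega)] at hs
          have h : 2 * m = k - 1 := by omega
          rw [h]; exact hs
      have hc1 : (l, 2 * m + 1) ∈ T := by
        have hs := (hT.2 (l, 2 * m) hc0 hpos).2
        simp only at hs
        rw [if_pos (by omega)] at hs
        exact hs
      have hlL : l ≤ L := hb _ hr0
      have hc0lt : 2 * m < 2 ^ l := hT.1 _ hc0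
      have hc1lt : 2 * m + 1 < 2 ^ l := hT.1 _ hc1
      have hpow : 2 ^ (l - 1) * 2 = 2 ^ l := by
        rw [← pow_succ]; congr 1; omega
      have hmlt : m < 2 ^ (l - 1) := by omega
      -- the reduced tree
      set T' := (T.erase (l, 2 * m)).erase (l, 2 * m + 1) with hT'def
      have hT' : IsFullBinaryTree T' := fbt_erase2 hT hpos hmax'
      have hεT' : (l - 1, m) ∈ T' := by
        refine Finset.mem_erase.mpr ⟨?_, Finset.mem_erase.mpr ⟨?_, hm⟩⟩
        · simp only [Ne, Prod.mk.injEq, not_and]; intro h; omega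
        · simp only [Ne, Prod.mk.injEq, not_and]; intro h; omega
      have hc1mem : (l, 2 * m + 1) ∈ T.erase (l, 2 * m) := by
        refine Finset.mem_erase.mpr ⟨?_, hc1⟩
        simp only [Ne, Prod.mk.injEq, not_and]; intro _; omega
      have hcard' : T'.card ≤ N := by
        have e1 : T'.card = (T.erase (l, 2 * m)).card - 1 :=
          Finset.card_erase_of_mem hc1mem
        have e2 : (T.erase (l, 2 * m)).card = T.card - 1 :=
          Finset.card_erase_of_mem hc0
        have e3 : 1 < T.card := Finset.one_lt_card.mpr
          ⟨_, hc0, _, hc1, by simp only [Ne, Prod.mk.injEq, not_and]; intro _; omega⟩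
        omega
      have hb' : ∀ r ∈ T', r.1 ≤ L := fun r hr =>
        hb r (Finset.mem_of_mem_erase (Finset.mem_of_mem_erase hr))
      -- node classifications
      have hεint : (l - 1, m) ∈ treeInt T := by
        refine Finset.mem_filter.mpr ⟨hm, ?_⟩
        simpa [Nat.sub_add_cancel hpos] using hc0
      have hc0ext : (l, 2 * m) ∈ treeExt T := by
        refine Finset.mem_filter.mpr ⟨hc0, fun h => ?_⟩
        have := hmax' _ h; simp at this
      have hc1ext : (l, 2 * m + 1) ∈ ((treeExt T).erase (l, 2 * m)) := by
        refine Finset.mem_erase.mpr ⟨?_, ?_⟩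
        · simp only [Ne, Prod.mk.injEq, not_and]; intro _; omega
        · refine Finset.mem_filter.mpr ⟨hc1, fun h => ?_⟩
          have := hmax' _ h; simp at this
      have hεnot : (l - 1, m) ∉ ((treeExt T).erase (l, 2 * m)).erase (l, 2 * m + 1) := by
        intro h
        have h' := Finset.mem_of_mem_erase (Finset.mem_of_mem_erase h)
        refine (Finset.mem_filter.mp h').2 ?_
        simpa [Nat.sub_add_cancel hpos] using hc0
      have hE : treeInt T' = (treeInt T).erase (l - 1, m) := int_erase2 hpos hmax'
      have hF : treeExt T' =
          insert (l - 1, m) (((treeExt T).erase (l, 2 * m)).erase (l, 2 * m + 1)) :=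
        ext_erase2 hpos hmax' hm
      -- product decompositions
      have hintP : ∏ r ∈ treeInt T, (p r.1 r.2 * nuX a x r.1 r.2) =
          (p (l - 1) m * nuX a x (l - 1) m) * ∏ r ∈ treeInt T', (p r.1 r.2 * nuX a x r.1 r.2) := by
        rw [hE]; exact (Finset.mul_prod_erase _ (fun r => p r.1 r.2 * nuX a x r.1 r.2) hεint).symm
      have hintQ : ∏ r ∈ treeInt T, q r.1 r.2 =
          q (l - 1) m * ∏ r ∈ treeInt T', q r.1 r.2 := by
        rw [hE]; exact (Finset.mul_prod_erase _ (fun r => q r.1 r.2) hεint).symm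
      have hextP : ∏ r ∈ treeExt T, (1 - p r.1 r.2) =
          (1 - p l (2 * m)) * ((1 - p l (2 * m + 1)) *
            ∏ r ∈ ((treeExt T).erase (l, 2 * m)).erase (l, 2 * m + 1), (1 - p r.1 r.2)) := by
        rw [← Finset.mul_prod_erase _ _ hc0ext, ← Finset.mul_prod_erase _ _ hc1ext]
      have hextQ : ∏ r ∈ treeExt T, (1 - q r.1 r.2) =
          (1 - q l (2 * m)) * ((1 - q l (2 * m + 1)) *
            ∏ r ∈ ((treeExt T).erase (l, 2 * m)).erase (l, 2 * m + 1), (1 - q r.1 r.2)) := by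
        rw [← Finset.mul_prod_erase _ _ hc0ext, ← Finset.mul_prod_erase _ _ hc1ext]
      have hextP' : ∏ r ∈ treeExt T', (1 - p r.1 r.2) =
          (1 - p (l - 1) m) *
            ∏ r ∈ ((treeExt T).erase (l, 2 * m)).erase (l, 2 * m + 1), (1 - p r.1 r.2) := by
        rw [hF, Finset.prod_insert hεnot]
      have hextQ' : ∏ r ∈ treeExt T', (1 - q r.1 r.2) =
          (1 - q (l - 1) m) *
            ∏ r ∈ ((treeExt T).erase (l, 2 * m)).erase (l, 2 * m + 1), (1 - q r.1 r.2) := by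
        rw [hF, Finset.prod_insert hεnot]
      -- nonvanishing
      have hpε := hp (l - 1) (by omega) m hmlt
      have hqε := hq (l - 1) (by omega) m hmlt
      have h1p : (1 : ℝ) - p (l - 1) m ≠ 0 := by have := hpε.2; intro h; linarith
      have h1q : (1 : ℝ) - q (l - 1) m ≠ 0 := by have := hqε.2; intro h; linarith
      -- key identity from hrec
      have hr := hrec (l - 1) (by omega) m hmlt
      rw [show l - 1 + 1 = l from by omega] at hr
      have hkey : p (l - 1) m * nuX a x (l - 1) m * (1 - p l (2 * m)) * (1 - p l (2 * m + 1))
            * (1 - q (l - 1) m) =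
          q (l - 1) m * (1 - q l (2 * m)) * (1 - q l (2 * m + 1)) * (1 - p (l - 1) m) := by
        field_simp at hr
        linear_combination -hr
      -- induction hypothesis on T'
      have hIH := ih T' hcard' hT' ⟨_, hεT'⟩ hb'
      rw [hextP', hextQ'] at hIH
      rw [hintP, hintQ, hextP, hextQ]
      apply mul_right_cancel₀ (mul_ne_zero h1p h1q)
      linear_combination
        ((∏ r ∈ treeInt T', (p r.1 r.2 * nuX a x r.1 r.2)) * (1 - p (l - 1) m) *
          (∏ r ∈ ((treeExt T).erase (l, 2 * m)).erase (l, 2 * m + 1), (1 - p r.1 r.2)) *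
          (1 - q 0 0)) * hkey +
        (q (l - 1) m * (1 - q l (2 * m)) * (1 - q l (2 * m + 1)) * (1 - p (l - 1) m)) * hIH
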